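/- Let d_{a,i} denote the coefficient of q^i in the Gaussian binomial coefficient (a+4 choose 4)_q, and for c ≥ 0 define f(a,c) = d_{a,2a-c} - d_{a,2a-c-1}. Then the double generating function identity holds: Σ_{a,c ≥ 0} f(a,c) q^a t^c = 1/((1-q^2)(1-q^3)(1-q t^2)) + q^2 t^2 /((1-q^2)(1-q^3)(1-q t^2)(1-q t)). -/

import Mathlib

/-- `μ` is a partition with distinct parts (strictly decreasing positive parts,
followed by a tail of zeros), encoded as a function `Fin b → ℕ`. -/
def DistinctParts {b : ℕ} (μ : Fin b → ℕ) : Prop :=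
  ∀ i j : Fin b, i < j → μ j = 0 ∨ μ j < μ i

/-- `μ` is a partition with distinct parts contained inside the shifted shape `lam`. -/
def FitsD {b : ℕ} (lam μ : Fin b → ℕ) : Prop :=
  DistinctParts μ ∧ ∀ i, μ i ≤ lam i

/-- The coefficient of `q^k` in the rank-generating function `F_lam`:
the number of partitions with distinct parts of size `k` contained inside `lam`. -/
noncomputable def Fcoeff {b : ℕ} (lam : Fin b → ℕ) (k : ℕ) : ℕ :=
  Nat.card {μ : Fin b → ℕ // FitsD lam μ ∧ ∑ i, μ i = k}

/-- The coefficient of `q^k` in the rank-generating function `G_lam` of arbitrary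
partitions contained inside the straight Ferrers shape `lam`. -/
noncomputable def Gcoeff {b : ℕ} (lam : Fin b → ℕ) (k : ℕ) : ℕ :=
  Nat.card {μ : Fin b → ℕ // Antitone μ ∧ (∀ i, μ i ≤ lam i) ∧ ∑ i, μ i = k}

/-- The coefficient of `q^i` in the Gaussian binomial coefficient `(m choose k)_q`,
which is the rank-generating function of partitions inside a `k × (m-k)` rectangle. -/
noncomputable def gaussCoeff (m k i : ℕ) : ℕ :=
  Gcoeff (fun _ : Fin k => m - k) i

/-- `dZ a i` is the coefficient of `q^i` in `(a+4 choose 4)_q`, with value `0` for `i < 0`. -/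
noncomputable def dZ (a : ℕ) (i : ℤ) : ℕ :=
  if 0 ≤ i then gaussCoeff (a + 4) 4 i.toNat else 0



def S4 (a k : ℕ) : Type := {μ : Fin 4 → ℕ // Antitone μ ∧ (∀ i, μ i ≤ a) ∧ ∑ i, μ i = k}
def T3 (a k : ℕ) : Type := {ν : Fin 3 → ℕ // Antitone ν ∧ (∀ i, ν i ≤ a) ∧ ∑ i, ν i = k}
def W3 (k : ℕ) : Type := {ν : Fin 3 → ℕ // Antitone ν ∧ ∑ i, ν i = k}
def W2 (k : ℕ) : Type := {ν : Fin 2 → ℕ // Antitone ν ∧ ∑ i, ν i = k}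

lemma le_sum_fin {n : ℕ} (f : Fin n → ℕ) (i : Fin n) : f i ≤ ∑ j, f j :=
  Finset.single_le_sum (fun j _ => Nat.zero_le (f j)) (Finset.mem_univ i)

lemma finite_aux {n k : ℕ} {P : (Fin n → ℕ) → Prop}
    (hP : ∀ μ, P μ → ∑ i, μ i = k) : Finite {μ : Fin n → ℕ // P μ} := by
  apply Finite.of_injective (β := Fin n → Fin (k+1))
    (fun μ i => ⟨μ.1 i, by have h1 := le_sum_fin μ.1 i; have h2 := hP μ.1 μ.2; omega⟩)
  intro μ ν h
  apply Subtype.ext; funext i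
  exact congrArg Fin.val (congrFun h i)

instance S4.finite (a k : ℕ) : Finite (S4 a k) := finite_aux (fun _ h => h.2.2)
instance T3.finite (a k : ℕ) : Finite (T3 a k) := finite_aux (fun _ h => h.2.2)
instance W3.finite (k : ℕ) : Finite (W3 k) := finite_aux (fun _ h => h.2)
instance W2.finite (k : ℕ) : Finite (W2 k) := finite_aux (fun _ h => h.2)

lemma antitone4 {f : Fin 4 → ℕ} (h1 : f 1 ≤ f 0) (h2 : f 2 ≤ f 1) (h3 : f 3 ≤ f 2) :
    Antitone f := by
  intro i j hij; fin_cases i <;> fin_cases j <;> simp_all <;> omega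

lemma antitone3 {f : Fin 3 → ℕ} (h1 : f 1 ≤ f 0) (h2 : f 2 ≤ f 1) : Antitone f := by
  intro i j hij; fin_cases i <;> fin_cases j <;> simp_all <;> omega

lemma antitone2 {f : Fin 2 → ℕ} (h1 : f 1 ≤ f 0) : Antitone f := by
  intro i j hij; fin_cases i <;> fin_cases j <;> simp_all

lemma card_split {α : Type} [Finite α] (Q : α → Prop) :
    Nat.card α = Nat.card {x : α // Q x} + Nat.card {x : α // ¬ Q x} := by
  classical
  rw [← Nat.card_sum]
  exact (Nat.card_congr (Equiv.sumCompl Q)).symm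

/-- N5 top part equiv -/
def topEquiv (a j : ℕ) : {μ : S4 (a+1) ((a+1)+j) // μ.1 0 = a+1} ≃ T3 (a+1) j where
  toFun μ := ⟨![μ.1.1 1, μ.1.1 2, μ.1.1 3], by
    obtain ⟨⟨f, hA, hB, hS⟩, h0⟩ := μ
    refine ⟨antitone3 (by exact hA (by decide)) (by exact hA (by decide)), fun i => ?_, ?_⟩
    · fin_cases i <;> exact hB _
    · rw [Fin.sum_univ_four] at hS
      rw [Fin.sum_univ_three]
      show f 1 + f 2 + f 3 = j
      simp only at h0
      omega⟩
  invFun ν := ⟨⟨![a+1, ν.1 0, ν.1 1, ν.1 2], by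
    obtain ⟨g, hA, hB, hS⟩ := ν
    refine ⟨antitone4 (by exact hB 0) (by exact hA (by decide)) (by exact hA (by decide)),
      fun i => ?_, ?_⟩
    · fin_cases i
      · exact le_refl _
      · exact hB 0
      · exact hB 1
      · exact hB 2
    · rw [Fin.sum_univ_three] at hS
      rw [Fin.sum_univ_four]
      show (a+1) + g 0 + g 1 + g 2 = (a+1)+j
      omega⟩, rfl⟩
  left_inv := by
    rintro ⟨⟨f, hf⟩, h0⟩
    apply Subtype.ext; apply Subtype.ext
    funext i
    fin_cases i
    · exact h0.symm
    · rfl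
    · rfl
    · rfl
  right_inv := by
    rintro ⟨g, hg⟩
    apply Subtype.ext
    funext i
    fin_cases i <;> rfl
/-- vanishing beyond the box -/
lemma S4_isEmpty {a k : ℕ} (h : 4*a < k) : IsEmpty (S4 a k) := by
  constructor
  rintro ⟨f, hA, hB, hS⟩
  rw [Fin.sum_univ_four] at hS
  have := hB 0; have := hB 1; have := hB 2; have := hB 3
  omega

instance S4_unique : Unique (S4 0 0) where
  default := ⟨![0,0,0,0], antitone4 (by norm_num) (by decide) (by decide),
    fun i => by fin_cases i <;> norm_num, by rw [Fin.sum_univ_four]; rfl⟩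
  uniq := by
    rintro ⟨f, hA, hB, hS⟩
    apply Subtype.ext; funext i
    have := hB i
    fin_cases i <;> simpa using hB _

/-- restriction equiv -/
def restrictEquiv (a k : ℕ) : {μ : S4 (a+1) k // μ.1 0 ≤ a} ≃ S4 a k where
  toFun μ := ⟨μ.1.1, μ.1.2.1, fun i => le_trans (μ.1.2.1 (Fin.zero_le i)) μ.2, μ.1.2.2.2⟩
  invFun μ := ⟨⟨μ.1, μ.2.1, fun i => le_trans (μ.2.2.1 i) (Nat.le_succ a), μ.2.2.2⟩, μ.2.2.1 0⟩
  left_inv μ := by apply Subtype.ext; apply Subtype.ext; rfl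
  right_inv μ := by apply Subtype.ext; rfl

lemma topEmpty (a k : ℕ) (h : k < a+1) : IsEmpty {μ : S4 (a+1) k // μ.1 0 = a+1} := by
  constructor
  rintro ⟨⟨f, hA, hB, hS⟩, h0⟩
  simp only at h0
  have h1 := le_sum_fin f 0
  omega

/-- complement symmetry -/
def symmMap (a k : ℕ) (hk : k ≤ 4*a) : S4 a k → S4 a (4*a - k) := fun μ =>
  ⟨![a - μ.1 3, a - μ.1 2, a - μ.1 1, a - μ.1 0], by
    obtain ⟨f, hA, hB, hS⟩ := μ
    refine ⟨antitone4 ?_ ?_ ?_, fun i => ?_, ?_⟩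
    · exact Nat.sub_le_sub_left (hA (by decide : (2:Fin 4) ≤ 3)) a
    · exact Nat.sub_le_sub_left (hA (by decide : (1:Fin 4) ≤ 2)) a
    · exact Nat.sub_le_sub_left (hA (by decide : (0:Fin 4) ≤ 1)) a
    · fin_cases i <;> exact Nat.sub_le _ _
    · rw [Fin.sum_univ_four] at hS
      rw [Fin.sum_univ_four]
      show (a - f 3) + (a - f 2) + (a - f 1) + (a - f 0) = 4*a - k
      have := hB 0; have := hB 1; have := hB 2; have := hB 3
      omega⟩

lemma symmMap_inj (a k : ℕ) (hk : k ≤ 4*a) : Function.Injective (symmMap a k hk) := by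
  rintro ⟨f, hf⟩ ⟨g, hg⟩ h
  have h0 : a - f 3 = a - g 3 := congrFun (congrArg Subtype.val h) 0
  have h1 : a - f 2 = a - g 2 := congrFun (congrArg Subtype.val h) 1
  have h2 : a - f 1 = a - g 1 := congrFun (congrArg Subtype.val h) 2
  have h3 : a - f 0 = a - g 0 := congrFun (congrArg Subtype.val h) 3
  have hb0 := hf.2.1 0; have hb1 := hf.2.1 1; have hb2 := hf.2.1 2; have hb3 := hf.2.1 3
  have hc0 := hg.2.1 0; have hc1 := hg.2.1 1; have hc2 := hg.2.1 2; have hc3 := hg.2.1 3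
  apply Subtype.ext; funext i
  fin_cases i
  · show f 0 = g 0; omega
  · show f 1 = g 1; omega
  · show f 2 = g 2; omega
  · show f 3 = g 3; omega

lemma card_S4_symm (a k : ℕ) (hk : k ≤ 4*a) :
    Nat.card (S4 a k) = Nat.card (S4 a (4*a - k)) := by
  apply le_antisymm
  · exact Nat.card_le_card_of_injective _ (symmMap_inj a k hk)
  · have h2 : 4*a - (4*a - k) = k := by omega
    have := Nat.card_le_card_of_injective _ (symmMap_inj a (4*a-k) (Nat.sub_le _ _))
    rwa [h2] at this
def t3w3Equiv (a k : ℕ) (h : k ≤ a) : T3 a k ≃ W3 k :=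
  Equiv.subtypeEquivRight (fun ν => by
    constructor
    · rintro ⟨hA, _, hS⟩; exact ⟨hA, hS⟩
    · rintro ⟨hA, hS⟩
      refine ⟨hA, fun i => ?_, hS⟩
      calc ν i ≤ ∑ j, ν j := le_sum_fin ν i
      _ = k := hS
      _ ≤ a := h)

def w3ZeroEquiv (k : ℕ) : {ν : W3 k // ν.1 2 = 0} ≃ W2 k where
  toFun ν := ⟨![ν.1.1 0, ν.1.1 1], by
    obtain ⟨⟨f, hA, hS⟩, h2⟩ := ν
    refine ⟨antitone2 (by exact hA (by decide)), ?_⟩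
    rw [Fin.sum_univ_three] at hS
    rw [Fin.sum_univ_two]
    show f 0 + f 1 = k
    simp only at h2
    omega⟩
  invFun ν := ⟨⟨![ν.1 0, ν.1 1, 0], by
    obtain ⟨g, hA, hS⟩ := ν
    refine ⟨antitone3 (by exact hA (by decide)) (by exact Nat.zero_le _), ?_⟩
    rw [Fin.sum_univ_two] at hS
    rw [Fin.sum_univ_three]
    show g 0 + g 1 + 0 = k
    omega⟩, rfl⟩
  left_inv := by
    rintro ⟨⟨f, hf⟩, h2⟩
    apply Subtype.ext; apply Subtype.ext; funext i
    simp only at h2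
    fin_cases i
    · rfl
    · rfl
    · exact h2.symm
  right_inv := by
    rintro ⟨g, hg⟩
    apply Subtype.ext; funext i
    fin_cases i <;> rfl

def w3PosEquiv (k : ℕ) : {ν : W3 (k+3) // ¬ ν.1 2 = 0} ≃ W3 k where
  toFun ν := ⟨fun i => ν.1.1 i - 1, by
    obtain ⟨⟨f, hA, hS⟩, h2⟩ := ν
    refine ⟨fun i j hij => Nat.sub_le_sub_right (hA hij) 1, ?_⟩
    rw [Fin.sum_univ_three] at hS
    rw [Fin.sum_univ_three]
    simp only at h2
    have g1 : 1 ≤ f 2 := by omega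
    have g2 : f 2 ≤ f 1 := hA (by decide)
    have g3 : f 1 ≤ f 0 := hA (by decide)
    show (f 0 - 1) + (f 1 - 1) + (f 2 - 1) = k
    omega⟩
  invFun ν := ⟨⟨fun i => ν.1 i + 1, by
    obtain ⟨g, hA, hS⟩ := ν
    refine ⟨fun i j hij => Nat.add_le_add_right (hA hij) 1, ?_⟩
    rw [Fin.sum_univ_three] at hS
    rw [Fin.sum_univ_three]
    show (g 0 + 1) + (g 1 + 1) + (g 2 + 1) = k + 3
    omega⟩, by simp⟩
  left_inv := by
    rintro ⟨⟨f, hA, hS⟩, h2⟩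
    apply Subtype.ext; apply Subtype.ext; funext i
    simp only at h2
    have g1 : 1 ≤ f 2 := by omega
    have g2 : f 2 ≤ f 1 := hA (by decide)
    have g3 : f 1 ≤ f 0 := hA (by decide)
    show f i - 1 + 1 = f i
    have : f 2 ≤ f i := hA (by fin_cases i <;> decide)
    omega
  right_inv := by
    rintro ⟨g, hg⟩
    apply Subtype.ext; funext i
    show g i + 1 - 1 = g i
    omega

lemma w3PosEmpty (k : ℕ) (h : k < 3) : IsEmpty {ν : W3 k // ¬ ν.1 2 = 0} := by
  constructor
  rintro ⟨⟨f, hA, hS⟩, h2⟩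
  simp only at h2
  rw [Fin.sum_univ_three] at hS
  have g2 : f 2 ≤ f 1 := hA (by decide)
  have g3 : f 2 ≤ f 0 := hA (by decide)
  omega

def w2ZeroEquiv (k : ℕ) : {ν : W2 k // ν.1 1 = 0} ≃ Unit where
  toFun _ := ()
  invFun _ := ⟨⟨![k, 0], antitone2 (Nat.zero_le _), by rw [Fin.sum_univ_two]; rfl⟩, rfl⟩
  left_inv := by
    rintro ⟨⟨f, hA, hS⟩, h1⟩
    apply Subtype.ext; apply Subtype.ext; funext i
    rw [Fin.sum_univ_two] at hS
    simp only at h1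
    fin_cases i
    · show k = f 0; omega
    · show (0:ℕ) = f 1; omega
  right_inv _ := rfl

def w2PosEquiv (k : ℕ) : {ν : W2 (k+2) // ¬ ν.1 1 = 0} ≃ W2 k where
  toFun ν := ⟨fun i => ν.1.1 i - 1, by
    obtain ⟨⟨f, hA, hS⟩, h2⟩ := ν
    refine ⟨fun i j hij => Nat.sub_le_sub_right (hA hij) 1, ?_⟩
    rw [Fin.sum_univ_two] at hS
    rw [Fin.sum_univ_two]
    simp only at h2
    have g2 : f 1 ≤ f 0 := hA (by decide)
    show (f 0 - 1) + (f 1 - 1) = k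
    omega⟩
  invFun ν := ⟨⟨fun i => ν.1 i + 1, by
    obtain ⟨g, hA, hS⟩ := ν
    refine ⟨fun i j hij => Nat.add_le_add_right (hA hij) 1, ?_⟩
    rw [Fin.sum_univ_two] at hS
    rw [Fin.sum_univ_two]
    show (g 0 + 1) + (g 1 + 1) = k + 2
    omega⟩, by simp⟩
  left_inv := by
    rintro ⟨⟨f, hA, hS⟩, h2⟩
    apply Subtype.ext; apply Subtype.ext; funext i
    simp only at h2
    have g2 : f 1 ≤ f 0 := hA (by decide)
    show f i - 1 + 1 = f i
    have : f 1 ≤ f i := hA (by fin_cases i <;> decide)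
    omega
  right_inv := by
    rintro ⟨g, hg⟩
    apply Subtype.ext; funext i
    show g i + 1 - 1 = g i
    omega

lemma w2PosEmpty (k : ℕ) (h : k < 2) : IsEmpty {ν : W2 k // ¬ ν.1 1 = 0} := by
  constructor
  rintro ⟨⟨f, hA, hS⟩, h2⟩
  simp only at h2
  rw [Fin.sum_univ_two] at hS
  have g2 : f 1 ≤ f 0 := hA (by decide)
  omega

-- ================= numeric Z-layer =================

noncomputable def w2Z (i : ℤ) : ℕ := if 0 ≤ i then Nat.card (W2 i.toNat) else 0
noncomputable def w3Z (i : ℤ) : ℕ := if 0 ≤ i then Nat.card (W3 i.toNat) else 0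
noncomputable def t3Z (a : ℕ) (i : ℤ) : ℕ := if 0 ≤ i then Nat.card (T3 a i.toNat) else 0

lemma card_W2_rec (k : ℕ) : Nat.card (W2 (k+2)) = 1 + Nat.card (W2 k) := by
  rw [card_split (fun ν : W2 (k+2) => ν.1 1 = 0)]
  rw [Nat.card_congr (w2ZeroEquiv (k+2)), Nat.card_congr (w2PosEquiv k)]
  simp

lemma card_W2_small (k : ℕ) (h : k < 2) : Nat.card (W2 k) = 1 := by
  rw [card_split (fun ν : W2 k => ν.1 1 = 0)]
  rw [Nat.card_congr (w2ZeroEquiv k)]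
  haveI := w2PosEmpty k h
  have hz : Nat.card {ν : W2 k // ¬ ν.1 1 = 0} = 0 := Nat.card_of_isEmpty
  rw [hz]
  simp

lemma card_W3_rec (k : ℕ) : Nat.card (W3 (k+3)) = Nat.card (W2 (k+3)) + Nat.card (W3 k) := by
  rw [card_split (fun ν : W3 (k+3) => ν.1 2 = 0)]
  rw [Nat.card_congr (w3ZeroEquiv (k+3)), Nat.card_congr (w3PosEquiv k)]

lemma card_W3_small (k : ℕ) (h : k < 3) : Nat.card (W3 k) = Nat.card (W2 k) := by
  rw [card_split (fun ν : W3 k => ν.1 2 = 0)]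
  rw [Nat.card_congr (w3ZeroEquiv k)]
  haveI := w3PosEmpty k h
  have hz : Nat.card {ν : W3 k // ¬ ν.1 2 = 0} = 0 := Nat.card_of_isEmpty
  rw [hz]
  simp

lemma card_S4_L1_big (a j : ℕ) : Nat.card (S4 (a+1) ((a+1)+j)) =
    Nat.card (S4 a ((a+1)+j)) + Nat.card (T3 (a+1) j) := by
  rw [card_split (fun μ : S4 (a+1) ((a+1)+j) => μ.1 0 ≤ a)]
  rw [Nat.card_congr (restrictEquiv a ((a+1)+j))]
  congr 1
  rw [← Nat.card_congr (topEquiv a j)]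
  apply Nat.card_congr
  apply Equiv.subtypeEquivRight
  intro μ
  have := μ.2.2.1 0
  omega

lemma card_S4_L1_small (a k : ℕ) (h : k < a+1) :
    Nat.card (S4 (a+1) k) = Nat.card (S4 a k) := by
  rw [card_split (fun μ : S4 (a+1) k => μ.1 0 ≤ a)]
  rw [Nat.card_congr (restrictEquiv a k)]
  haveI he : IsEmpty {μ : S4 (a+1) k // ¬ μ.1 0 ≤ a} := by
    have h2 := topEmpty a k h
    constructor
    rintro ⟨μ, hμ⟩
    have := μ.2.2.1 0
    exact h2.false ⟨μ, by omega⟩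
  have hz : Nat.card {μ : S4 (a+1) k // ¬ μ.1 0 ≤ a} = 0 := Nat.card_of_isEmpty
  rw [hz]
  simp

lemma w2Z_rec (i : ℤ) : w2Z i = (if 0 ≤ i then 1 else 0) + w2Z (i-2) := by
  unfold w2Z
  by_cases h : 0 ≤ i
  · by_cases h2 : 0 ≤ i - 2
    · rw [if_pos h, if_pos h, if_pos h2]
      have : i.toNat = (i-2).toNat + 2 := by omega
      rw [this, card_W2_rec]
    · rw [if_pos h, if_pos h, if_neg h2]
      rw [card_W2_small _ (by omega)]
  · rw [if_neg h, if_neg h, if_neg (by omega : ¬ (0:ℤ) ≤ i - 2)]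

lemma w3Z_rec (i : ℤ) : w3Z i = w2Z i + w3Z (i-3) := by
  unfold w3Z w2Z
  by_cases h : 0 ≤ i
  · by_cases h2 : 0 ≤ i - 3
    · rw [if_pos h, if_pos h, if_pos h2]
      have : i.toNat = (i-3).toNat + 3 := by omega
      rw [this, card_W3_rec]
    · rw [if_pos h, if_pos h, if_neg h2]
      rw [card_W3_small _ (by omega)]
      simp
  · rw [if_neg h, if_neg h, if_neg (by omega : ¬ (0:ℤ) ≤ i - 3)]


lemma t3Z_eq_w3Z (a : ℕ) (i : ℤ) (h : i ≤ a) : t3Z a i = w3Z i := by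
  unfold t3Z w3Z
  by_cases h0 : 0 ≤ i
  · rw [if_pos h0, if_pos h0]
    exact Nat.card_congr (t3w3Equiv a i.toNat (by omega))
  · rw [if_neg h0, if_neg h0]

lemma dZ_card (a : ℕ) (i : ℤ) (h : 0 ≤ i) : dZ a i = Nat.card (S4 a i.toNat) := by
  rw [dZ, if_pos h]
  show Gcoeff (fun _ : Fin 4 => a + 4 - 4) i.toNat = _
  have : (fun _ : Fin 4 => a + 4 - 4) = (fun _ : Fin 4 => a) := by
    funext _; omega
  rw [this]
  rfl

lemma dZ_neg (a : ℕ) (i : ℤ) (h : i < 0) : dZ a i = 0 := by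
  rw [dZ, if_neg (by omega)]

lemma dZ_vanish (a : ℕ) (i : ℤ) (h : 4*a < i) : dZ a i = 0 := by
  rw [dZ_card a i (by omega)]
  haveI := S4_isEmpty (a:=a) (k:=i.toNat) (by omega)
  exact Nat.card_of_isEmpty

lemma dZ_symm (a : ℕ) (i : ℤ) : dZ a i = dZ a (4*a - i) := by
  rcases lt_or_ge i 0 with h | h
  · rw [dZ_neg a i h, dZ_vanish a _ (by omega)]
  · rcases le_or_gt i (4*a) with h2 | h2
    · rw [dZ_card a i h, dZ_card a _ (by omega)]
      have ht : (4*(a:ℤ) - i).toNat = 4*a - i.toNat := by omega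
      rw [ht]
      exact card_S4_symm a i.toNat (by omega)
    · rw [dZ_vanish a i h2, dZ_neg a _ (by omega)]

lemma dZ_L1 (a : ℕ) (i : ℤ) : dZ (a+1) i = dZ a i + t3Z (a+1) (i - (a+1)) := by
  rcases lt_or_ge i 0 with h | h
  · rw [dZ_neg _ _ h, dZ_neg _ _ h, t3Z, if_neg (by omega)]
  · rcases lt_or_ge i (a+1) with h2 | h2
    · rw [dZ_card _ _ h, dZ_card _ _ h, t3Z, if_neg (by omega)]
      rw [card_S4_L1_small a i.toNat (by omega)]
      simp
    · rw [dZ_card _ _ h, dZ_card _ _ h, t3Z, if_pos (by omega)]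
      have hrep : i.toNat = (a+1) + ((i - (a+1:ℕ)).toNat) := by omega
      rw [hrep, card_S4_L1_big]
      norm_cast


-- ================= g-layer =================

noncomputable def hZv (a : ℕ) (c : ℤ) : ℤ := (dZ a (2*(a:ℤ) - c) : ℤ)
noncomputable def gval (a : ℕ) (c : ℤ) : ℤ := hZv a c - hZv a (c+1)

lemma w3Z_neg (i : ℤ) (h : i < 0) : w3Z i = 0 := by rw [w3Z, if_neg (by omega)]
lemma w2Z_neg (i : ℤ) (h : i < 0) : w2Z i = 0 := by rw [w2Z, if_neg (by omega)]

lemma w3Z_zero : w3Z 0 = 1 := by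
  have h1 := w3Z_rec 0
  have h2 := w2Z_rec 0
  rw [show (0:ℤ)-3 = -3 by ring] at h1
  rw [show (0:ℤ)-2 = -2 by ring, if_pos (le_refl (0:ℤ))] at h2
  rw [w3Z_neg (-3:ℤ) (by omega)] at h1
  rw [w2Z_neg (-2:ℤ) (by omega)] at h2
  omega

lemma hZv_rec (a : ℕ) (c : ℤ) : hZv (a+1) c = hZv a (c-2) + t3Z (a+1) ((a:ℤ)+1-c) := by
  have h1 := dZ_L1 a (2*((a:ℤ)+1) - c)
  have e1 : (2*((a:ℤ)+1) - c) = 2*(a:ℤ) - (c-2) := by ring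
  have e2 : (2*((a:ℤ)+1) - c) - ((a:ℤ)+1) = (a:ℤ)+1-c := by ring
  rw [e2] at h1
  unfold hZv
  push_cast
  nth_rewrite 2 [e1] at h1
  push_cast at h1
  omega

lemma gval_rec (a : ℕ) (c : ℤ) (hc : 0 ≤ c) :
    gval (a+1) c = gval a (c-2) + (w3Z ((a:ℤ)+1-c) : ℤ) - w3Z ((a:ℤ)-c) := by
  have h1 := hZv_rec a c
  have h2 := hZv_rec a (c+1)
  rw [t3Z_eq_w3Z (a+1) ((a:ℤ)+1-c) (by push_cast; omega)] at h1
  rw [t3Z_eq_w3Z (a+1) ((a:ℤ)+1-(c+1)) (by push_cast; omega)] at h2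
  unfold gval
  rw [h1, h2]
  have e1 : c + 1 - 2 = (c - 2) + 1 := by ring
  rw [e1]
  have e2 : (a:ℤ) + 1 - (c+1) = (a:ℤ) - c := by ring
  rw [e2]
  ring

lemma hZv_zero (c : ℤ) : hZv 0 c = if c = 0 then 1 else 0 := by
  unfold hZv
  rcases lt_trichotomy c 0 with h | h | h
  · rw [dZ_vanish 0 _ (by push_cast; omega), if_neg (by omega)]
    norm_num
  · subst h
    rw [if_pos rfl, dZ_card 0 _ (by norm_num)]
    have ht : ((2*((0:ℕ):ℤ) - 0)).toNat = 0 := by norm_num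
    rw [ht, Nat.card_unique]
    norm_num
  · rw [dZ_neg 0 _ (by push_cast; omega), if_neg (by omega)]
    norm_num

lemma gval_zero_row (c : ℤ) : gval 0 c = (if c = 0 then 1 else 0) - (if c = -1 then 1 else 0) := by
  unfold gval
  rw [hZv_zero, hZv_zero]
  congr 1
  exact if_congr (by omega) rfl rfl

lemma gval_neg1 (a : ℕ) : gval a (-1) = - gval a 0 := by
  unfold gval hZv
  have h := dZ_symm a (2*(a:ℤ)+1)
  have e : 4*((a:ℕ):ℤ) - (2*(a:ℤ)+1) = 2*(a:ℤ) - 1 := by push_cast; ring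
  rw [e] at h
  have e1 : 2*(a:ℤ) - (-1) = 2*(a:ℤ)+1 := by ring
  have e2 : 2*(a:ℤ) - (-1+1) = 2*(a:ℤ) := by ring
  have e3 : 2*(a:ℤ) - (0+1) = 2*(a:ℤ) - 1 := by ring
  rw [e1, e2, e3, h]
  ring

lemma gval_neg2 (a : ℕ) : gval a (-2) = - gval a 1 := by
  unfold gval hZv
  have h1 := dZ_symm a (2*(a:ℤ)+2)
  have h2 := dZ_symm a (2*(a:ℤ)+1)
  have e1 : 4*((a:ℕ):ℤ) - (2*(a:ℤ)+2) = 2*(a:ℤ) - 2 := by push_cast; ring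
  have e2 : 4*((a:ℕ):ℤ) - (2*(a:ℤ)+1) = 2*(a:ℤ) - 1 := by push_cast; ring
  rw [e1] at h1
  rw [e2] at h2
  have f1 : 2*(a:ℤ) - (-2) = 2*(a:ℤ)+2 := by ring
  have f2 : 2*(a:ℤ) - (-2+1) = 2*(a:ℤ)+1 := by ring
  have f3 : 2*(a:ℤ) - (1:ℤ) = 2*(a:ℤ)-1 := by ring
  have f4 : 2*(a:ℤ) - ((1:ℤ)+1) = 2*(a:ℤ)-2 := by ring
  rw [f1, f2, f3, f4, h1, h2]
  ring

/-- the central-column and next-column values -/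
lemma AB_lemma (a : ℕ) : gval a 0 = (w3Z (a:ℤ) : ℤ) - w3Z ((a:ℤ)-1) ∧ gval a 1 = 0 := by
  induction a with
  | zero =>
    constructor
    · rw [gval_zero_row]
      norm_num
      rw [w3Z_zero, w3Z_neg (-1:ℤ) (by omega)]
      norm_num
    · rw [gval_zero_row]
      norm_num
  | succ a ih =>
    obtain ⟨ihA, ihB⟩ := ih
    constructor
    · have h := gval_rec a 0 (le_refl 0)
      rw [show (0:ℤ)-2 = -2 by ring, gval_neg2 a, ihB] at h
      rw [h]
      push_cast
      ring
    · have h := gval_rec a 1 (by omega)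
      rw [show (1:ℤ)-2 = -1 by ring, gval_neg1 a, ihA] at h
      rw [h]
      push_cast
      ring

lemma w3Z_alt (m : ℤ) : (w3Z m : ℤ) - w3Z (m-2) - w3Z (m-3) + w3Z (m-5) = if 0 ≤ m then 1 else 0 := by
  have h1 := w3Z_rec m
  have h2 := w3Z_rec (m-2)
  have h3 := w2Z_rec m
  have e : m - 2 - 3 = m - 5 := by ring
  rw [e] at h2
  by_cases h : 0 ≤ m
  · rw [if_pos h] at h3 ⊢
    omega
  · rw [if_neg h] at h3 ⊢
    omega

/-- coefficient of F·(1-qt²) -/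
lemma cG_eq (a c : ℕ) :
    gval a (c:ℤ) - (if 1 ≤ a ∧ 2 ≤ c then gval (a-1) ((c:ℤ)-2) else 0)
      = (if c = 1 then 0 else (w3Z ((a:ℤ) - c) : ℤ) - w3Z ((a:ℤ) - c - 1)) := by
  match a with
  | 0 =>
    rw [if_neg (by omega)]
    rw [gval_zero_row]
    by_cases h : c = 0
    · subst h
      rw [if_pos (by norm_num), if_neg (by norm_num), if_neg (by omega)]
      rw [show ((0:ℕ):ℤ) - ((0:ℕ):ℤ) = 0 by norm_num]
      rw [show ((0:ℤ)) - 1 = -1 by norm_num]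
      rw [w3Z_zero, w3Z_neg (-1:ℤ) (by omega)]
      norm_num
    · rw [if_neg (show ¬((c:ℤ) = 0) by exact_mod_cast h), if_neg (show ¬((c:ℤ) = -1) by omega)]
      by_cases h1 : c = 1
      · subst h1
        norm_num
      · rw [if_neg h1, w3Z_neg (((0:ℕ):ℤ)-(c:ℤ)) (by omega), w3Z_neg (((0:ℕ):ℤ)-(c:ℤ)-1) (by omega)]
        norm_num
  | a+1 =>
    match c with
    | 0 =>
      rw [if_neg (by omega), if_neg (by omega)]
      have hA := (AB_lemma (a+1)).1
      rw [show ((0:ℕ):ℤ) = 0 by norm_num, hA]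
      push_cast
      ring
    | 1 =>
      rw [if_neg (by omega), if_pos rfl]
      have hB := (AB_lemma (a+1)).2
      rw [show ((1:ℕ):ℤ) = 1 by norm_num, hB]
      ring
    | (c+2) =>
      rw [if_pos ⟨by omega, by omega⟩, if_neg (by omega : ¬ (c+2 = 1))]
      have hc2 : ((c+2:ℕ):ℤ) = (c:ℤ)+2 := by push_cast; ring
      rw [hc2]
      have h := gval_rec a ((c:ℤ)+2) (by omega)
      have e : (c:ℤ)+2-2 = (c:ℤ) := by ring
      rw [e] at h
      rw [show (a+1-1 : ℕ) = a by omega, e, h]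
      have e3 : ((a:ℤ)+1-((c:ℤ)+2)) = ((a+1:ℕ):ℤ) - ((c:ℤ)+2) := by push_cast; ring
      have e4 : ((a:ℤ)-((c:ℤ)+2)) = ((a+1:ℕ):ℤ) - ((c:ℤ)+2) - 1 := by push_cast; ring
      rw [e3, e4]
      ring

-- ================= series layer =================

noncomputable def WW (a c : ℤ) : ℤ := if c = 1 then 0 else (w3Z (a-c) : ℤ) - w3Z (a-c-1)

lemma WW_drop (a c s : ℤ) (hc : 0 ≤ c) (hs : 0 ≤ s) (h : a < s) : WW (a - s) c = 0 := by
  unfold WW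
  split_ifs with h1
  · rfl
  · rw [w3Z_neg _ (by omega), w3Z_neg _ (by omega)]
    ring

lemma WW_alt (a c : ℤ) (ha : 0 ≤ a) (hc : 0 ≤ c) :
    WW a c - (if 2 ≤ a then WW (a-2) c else 0) - (if 3 ≤ a then WW (a-3) c else 0)
      + (if 5 ≤ a then WW (a-5) c else 0) = if a = c ∧ a ≠ 1 then 1 else 0 := by
  have e2 : (if 2 ≤ a then WW (a-2) c else 0) = WW (a-2) c := by
    split_ifs with h
    · rfl
    · exact (WW_drop a c 2 hc (by omega) (by omega)).symm
  have e3 : (if 3 ≤ a then WW (a-3) c else 0) = WW (a-3) c := by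
    split_ifs with h
    · rfl
    · exact (WW_drop a c 3 hc (by omega) (by omega)).symm
  have e5 : (if 5 ≤ a then WW (a-5) c else 0) = WW (a-5) c := by
    split_ifs with h
    · rfl
    · exact (WW_drop a c 5 hc (by omega) (by omega)).symm
  rw [e2, e3, e5]
  unfold WW
  by_cases h1 : c = 1
  · subst h1
    simp only [if_pos rfl]
    have : ¬ (a = 1 ∧ a ≠ 1) := by omega
    rw [if_neg this]
    simp
  · simp only [if_neg h1]
    have A1 := w3Z_alt (a - c)
    have A2 := w3Z_alt (a - c - 1)
    rw [show a-c-1-2 = a-c-3 by ring, show a-c-1-3 = a-c-4 by ring,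
        show a-c-1-5 = a-c-6 by ring] at A2
    rw [show a-2-c-1 = a-c-3 by ring, show a-2-c = a-c-2 by ring,
        show a-3-c-1 = a-c-4 by ring, show a-3-c = a-c-3 by ring,
        show a-5-c-1 = a-c-6 by ring, show a-5-c = a-c-5 by ring]
    by_cases hq : a = c ∧ a ≠ 1
    · rw [if_pos hq]
      rw [if_pos (by omega : (0:ℤ) ≤ a - c)] at A1
      rw [if_neg (by omega : ¬ (0:ℤ) ≤ a - c - 1)] at A2
      omega
    · rw [if_neg hq]
      rcases lt_trichotomy (a - c) 0 with hlt | heq | hgt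
      · rw [if_neg (by omega)] at A1
        rw [if_neg (by omega)] at A2
        omega
      · -- a = c, so a = 1 (since hq fails); fine: both sides...
        rw [if_pos (by omega)] at A1
        rw [if_neg (by omega)] at A2
        -- hq fails with a = c means a = 1, c = 1, contradicting h1? c = 1 excluded!
        exfalso
        apply h1
        omega
      · rw [if_pos (by omega)] at A1
        rw [if_pos (by omega)] at A2
        omega

lemma finsupp2_le_iff (m : Fin 2 →₀ ℕ) (u v : ℕ) :
    (Finsupp.single (0 : Fin 2) u + Finsupp.single 1 v ≤ m) ↔ (u ≤ m 0 ∧ v ≤ m 1) := by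
  rw [Finsupp.le_def, Fin.forall_fin_two]
  simp [Finsupp.add_apply, Finsupp.single_apply]

lemma finsupp2_eq_iff (m : Fin 2 →₀ ℕ) (u v : ℕ) :
    (m = Finsupp.single 0 u + Finsupp.single 1 v) ↔ (m 0 = u ∧ m 1 = v) := by
  constructor
  · intro h
    subst h
    constructor <;> simp [Finsupp.add_apply, Finsupp.single_apply]
  · intro ⟨h0, h1⟩
    ext i
    fin_cases i
    · simpa [Finsupp.add_apply, Finsupp.single_apply] using h0
    · simpa [Finsupp.add_apply, Finsupp.single_apply] using h1

lemma finsupp2_sub_apply (m : Fin 2 →₀ ℕ) (u v : ℕ) :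
    ((m - (Finsupp.single 0 u + Finsupp.single 1 v) : Fin 2 →₀ ℕ)) 0 = m 0 - u ∧
    ((m - (Finsupp.single 0 u + Finsupp.single 1 v) : Fin 2 →₀ ℕ)) 1 = m 1 - v := by
  constructor <;>
    simp [Finsupp.tsub_apply, Finsupp.add_apply, Finsupp.single_apply]

lemma coeff_mul_XX (φ : MvPowerSeries (Fin 2) ℤ) (u v : ℕ) (m : Fin 2 →₀ ℕ) :
    MvPowerSeries.coeff m (φ * (MvPowerSeries.X 0 ^ u * MvPowerSeries.X 1 ^ v)) =
      if u ≤ m 0 ∧ v ≤ m 1 then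
        MvPowerSeries.coeff (m - (Finsupp.single 0 u + Finsupp.single 1 v)) φ else 0 := by
  rw [MvPowerSeries.X_pow_eq, MvPowerSeries.X_pow_eq, MvPowerSeries.monomial_mul_monomial,
    MvPowerSeries.coeff_mul_monomial]
  split_ifs with h1 h2 h2
  · exact mul_one _
  · exact absurd ((finsupp2_le_iff m u v).mp h1) h2
  · exact absurd ((finsupp2_le_iff m u v).mpr h2) h1
  · rfl


lemma finsupp2_zero_iff (m : Fin 2 →₀ ℕ) : (m = 0) ↔ (m 0 = 0 ∧ m 1 = 0) := by
  constructor
  · intro h; subst h; simp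
  · intro ⟨h0, h1⟩
    ext i
    fin_cases i
    · simpa using h0
    · simpa using h1

/-- The double generating function identity
`Σ_{a,c} f(a,c) q^a t^c = 1/((1-q²)(1-q³)(1-qt²)) + q²t²/((1-q²)(1-q³)(1-qt²)(1-qt))`,
stated after clearing denominators in `MvPowerSeries (Fin 2) ℤ` (with `q = X 0`,
`t = X 1`): `F · (1-q²)(1-q³)(1-qt²)(1-qt) = 1 - qt + q²t²`. -/
theorem double_generating_function_identity (F : MvPowerSeries (Fin 2) ℤ)
    (hF : ∀ m : Fin 2 →₀ ℕ, MvPowerSeries.coeff m F =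
      (dZ (m 0) (2 * ((m 0 : ℕ) : ℤ) - (m 1)) : ℤ) -
        dZ (m 0) (2 * ((m 0 : ℕ) : ℤ) - (m 1) - 1)) :
    F * ((1 - (MvPowerSeries.X 0 : MvPowerSeries (Fin 2) ℤ) ^ 2) *
          (1 - MvPowerSeries.X 0 ^ 3) *
          (1 - MvPowerSeries.X 0 * MvPowerSeries.X 1 ^ 2) *
          (1 - MvPowerSeries.X 0 * MvPowerSeries.X 1)) =
      1 - MvPowerSeries.X 0 * MvPowerSeries.X 1 +
        MvPowerSeries.X 0 ^ 2 * MvPowerSeries.X 1 ^ 2 := by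
  classical
  have hFg : ∀ m : Fin 2 →₀ ℕ, MvPowerSeries.coeff m F = gval (m 0) ((m 1 : ℤ)) := by
    intro m
    rw [hF m]
    unfold gval hZv
    rw [show 2*((m 0 : ℕ):ℤ) - ((m 1:ℕ):ℤ) - 1 = 2*((m 0 : ℕ):ℤ) - (((m 1:ℕ):ℤ)+1) from by ring]
  have hG : ∀ m : Fin 2 →₀ ℕ,
      MvPowerSeries.coeff m (F * (1 - MvPowerSeries.X 0 * MvPowerSeries.X 1 ^ 2)) =
        WW ((m 0 : ℤ)) ((m 1 : ℤ)) := by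
    intro m
    have expand : F * (1 - MvPowerSeries.X 0 * MvPowerSeries.X 1 ^ 2) =
        F - F * (MvPowerSeries.X 0 ^ 1 * MvPowerSeries.X 1 ^ 2) := by ring
    rw [expand, map_sub, coeff_mul_XX, hFg m]
    have hsub := finsupp2_sub_apply m 1 2
    have hc := cG_eq (m 0) (m 1)
    by_cases h : 1 ≤ m 0 ∧ 2 ≤ m 1
    · rw [if_pos h, hFg _, hsub.1, hsub.2]
      rw [if_pos h] at hc
      rw [show ((m 1 - 2 : ℕ) : ℤ) = ((m 1 : ℕ) : ℤ) - 2 from by omega]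
      unfold WW
      rw [hc]
      by_cases h1 : m 1 = 1
      · rw [if_pos h1, if_pos (show ((m 1:ℕ):ℤ) = 1 from by exact_mod_cast h1)]
      · rw [if_neg h1, if_neg (show ¬ ((m 1:ℕ):ℤ) = 1 from by exact_mod_cast h1)]
    · rw [if_neg h]
      rw [if_neg h, sub_zero] at hc
      unfold WW
      rw [sub_zero, hc]
      by_cases h1 : m 1 = 1
      · rw [if_pos h1, if_pos (show ((m 1:ℕ):ℤ) = 1 from by exact_mod_cast h1)]
      · rw [if_neg h1, if_neg (show ¬ ((m 1:ℕ):ℤ) = 1 from by exact_mod_cast h1)]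
  have hH : ∀ m : Fin 2 →₀ ℕ,
      MvPowerSeries.coeff m ((F * (1 - MvPowerSeries.X 0 * MvPowerSeries.X 1 ^ 2)) *
        ((1 - MvPowerSeries.X 0 ^ 2) * (1 - MvPowerSeries.X 0 ^ 3))) =
        (if m 0 = m 1 ∧ m 0 ≠ 1 then 1 else 0) := by
    intro m
    have expand : (F * (1 - MvPowerSeries.X 0 * MvPowerSeries.X 1 ^ 2)) *
        ((1 - MvPowerSeries.X 0 ^ 2) * (1 - MvPowerSeries.X 0 ^ 3)) =
        (F * (1 - MvPowerSeries.X 0 * MvPowerSeries.X 1 ^ 2))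
        - (F * (1 - MvPowerSeries.X 0 * MvPowerSeries.X 1 ^ 2)) *
            (MvPowerSeries.X 0 ^ 2 * MvPowerSeries.X 1 ^ 0)
        - (F * (1 - MvPowerSeries.X 0 * MvPowerSeries.X 1 ^ 2)) *
            (MvPowerSeries.X 0 ^ 3 * MvPowerSeries.X 1 ^ 0)
        + (F * (1 - MvPowerSeries.X 0 * MvPowerSeries.X 1 ^ 2)) *
            (MvPowerSeries.X 0 ^ 5 * MvPowerSeries.X 1 ^ 0) := by ring
    rw [expand, map_add, map_sub, map_sub, coeff_mul_XX, coeff_mul_XX, coeff_mul_XX, hG m,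
      hG (m - (Finsupp.single 0 2 + Finsupp.single 1 0)),
      hG (m - (Finsupp.single 0 3 + Finsupp.single 1 0)),
      hG (m - (Finsupp.single 0 5 + Finsupp.single 1 0)),
      (finsupp2_sub_apply m 2 0).1, (finsupp2_sub_apply m 2 0).2,
      (finsupp2_sub_apply m 3 0).1, (finsupp2_sub_apply m 3 0).2,
      (finsupp2_sub_apply m 5 0).1, (finsupp2_sub_apply m 5 0).2]
    have key := WW_alt ((m 0 : ℤ)) ((m 1 : ℤ)) (by exact_mod_cast Nat.zero_le _)
      (by exact_mod_cast Nat.zero_le _)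
    have t2 : (if 2 ≤ m 0 ∧ 0 ≤ m 1 then WW (((m 0 - 2 : ℕ)):ℤ) (((m 1 - 0 : ℕ)):ℤ) else 0)
        = (if 2 ≤ ((m 0:ℕ):ℤ) then WW (((m 0:ℕ):ℤ)-2) ((m 1:ℕ):ℤ) else 0) := by
      by_cases h : 2 ≤ m 0
      · rw [if_pos ⟨h, Nat.zero_le _⟩, if_pos (show (2:ℤ) ≤ ((m 0:ℕ):ℤ) from by exact_mod_cast h),
          show ((m 0 - 2:ℕ):ℤ) = ((m 0:ℕ):ℤ)-2 from by omega, Nat.sub_zero]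
      · rw [if_neg (by tauto), if_neg (show ¬ (2:ℤ) ≤ ((m 0:ℕ):ℤ) from by exact_mod_cast h)]
    have t3 : (if 3 ≤ m 0 ∧ 0 ≤ m 1 then WW (((m 0 - 3 : ℕ)):ℤ) (((m 1 - 0 : ℕ)):ℤ) else 0)
        = (if 3 ≤ ((m 0:ℕ):ℤ) then WW (((m 0:ℕ):ℤ)-3) ((m 1:ℕ):ℤ) else 0) := by
      by_cases h : 3 ≤ m 0
      · rw [if_pos ⟨h, Nat.zero_le _⟩, if_pos (show (3:ℤ) ≤ ((m 0:ℕ):ℤ) from by exact_mod_cast h),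
          show ((m 0 - 3:ℕ):ℤ) = ((m 0:ℕ):ℤ)-3 from by omega, Nat.sub_zero]
      · rw [if_neg (by tauto), if_neg (show ¬ (3:ℤ) ≤ ((m 0:ℕ):ℤ) from by exact_mod_cast h)]
    have t5 : (if 5 ≤ m 0 ∧ 0 ≤ m 1 then WW (((m 0 - 5 : ℕ)):ℤ) (((m 1 - 0 : ℕ)):ℤ) else 0)
        = (if 5 ≤ ((m 0:ℕ):ℤ) then WW (((m 0:ℕ):ℤ)-5) ((m 1:ℕ):ℤ) else 0) := by
      by_cases h : 5 ≤ m 0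
      · rw [if_pos ⟨h, Nat.zero_le _⟩, if_pos (show (5:ℤ) ≤ ((m 0:ℕ):ℤ) from by exact_mod_cast h),
          show ((m 0 - 5:ℕ):ℤ) = ((m 0:ℕ):ℤ)-5 from by omega, Nat.sub_zero]
      · rw [if_neg (by tauto), if_neg (show ¬ (5:ℤ) ≤ ((m 0:ℕ):ℤ) from by exact_mod_cast h)]
    rw [t2, t3, t5, key]
    by_cases hq : m 0 = m 1 ∧ m 0 ≠ 1
    · rw [if_pos hq, if_pos (show ((m 0:ℕ):ℤ) = ((m 1:ℕ):ℤ) ∧ ((m 0:ℕ):ℤ) ≠ 1 from by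
        obtain ⟨hq1, hq2⟩ := hq
        constructor
        · exact_mod_cast hq1
        · exact_mod_cast hq2)]
    · rw [if_neg hq, if_neg (show ¬ (((m 0:ℕ):ℤ) = ((m 1:ℕ):ℤ) ∧ ((m 0:ℕ):ℤ) ≠ 1) from by
        intro hcon
        apply hq
        constructor
        · exact_mod_cast hcon.1
        · exact_mod_cast hcon.2)]
  have assoc : F * ((1 - (MvPowerSeries.X 0 : MvPowerSeries (Fin 2) ℤ) ^ 2) *
          (1 - MvPowerSeries.X 0 ^ 3) *
          (1 - MvPowerSeries.X 0 * MvPowerSeries.X 1 ^ 2) *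
          (1 - MvPowerSeries.X 0 * MvPowerSeries.X 1)) =
      ((F * (1 - MvPowerSeries.X 0 * MvPowerSeries.X 1 ^ 2)) *
        ((1 - MvPowerSeries.X 0 ^ 2) * (1 - MvPowerSeries.X 0 ^ 3))) *
        (1 - MvPowerSeries.X 0 * MvPowerSeries.X 1) := by ring
  rw [assoc]
  apply MvPowerSeries.ext
  intro m
  have expand : ((F * (1 - MvPowerSeries.X 0 * MvPowerSeries.X 1 ^ 2)) *
        ((1 - MvPowerSeries.X 0 ^ 2) * (1 - MvPowerSeries.X 0 ^ 3))) *
        (1 - MvPowerSeries.X 0 * MvPowerSeries.X 1) =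
      ((F * (1 - MvPowerSeries.X 0 * MvPowerSeries.X 1 ^ 2)) *
        ((1 - MvPowerSeries.X 0 ^ 2) * (1 - MvPowerSeries.X 0 ^ 3)))
      - ((F * (1 - MvPowerSeries.X 0 * MvPowerSeries.X 1 ^ 2)) *
        ((1 - MvPowerSeries.X 0 ^ 2) * (1 - MvPowerSeries.X 0 ^ 3))) *
          (MvPowerSeries.X 0 ^ 1 * MvPowerSeries.X 1 ^ 1) := by ring
  rw [expand, map_sub, coeff_mul_XX, hH m,
    hH (m - (Finsupp.single 0 1 + Finsupp.single 1 1)),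
    (finsupp2_sub_apply m 1 1).1, (finsupp2_sub_apply m 1 1).2]
  have rhs1 : (MvPowerSeries.X 0 * MvPowerSeries.X 1 : MvPowerSeries (Fin 2) ℤ) =
      MvPowerSeries.monomial (Finsupp.single 0 1 + Finsupp.single 1 1) 1 := by
    rw [show (MvPowerSeries.X 0 * MvPowerSeries.X 1 : MvPowerSeries (Fin 2) ℤ) =
      MvPowerSeries.X 0 ^ 1 * MvPowerSeries.X 1 ^ 1 from by ring,
      MvPowerSeries.X_pow_eq, MvPowerSeries.X_pow_eq, MvPowerSeries.monomial_mul_monomial,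
      mul_one]
  have rhs2 : (MvPowerSeries.X 0 ^ 2 * MvPowerSeries.X 1 ^ 2 : MvPowerSeries (Fin 2) ℤ) =
      MvPowerSeries.monomial (Finsupp.single 0 2 + Finsupp.single 1 2) 1 := by
    rw [MvPowerSeries.X_pow_eq, MvPowerSeries.X_pow_eq, MvPowerSeries.monomial_mul_monomial,
      mul_one]
  rw [map_add, map_sub, rhs1, rhs2, MvPowerSeries.coeff_one,
    MvPowerSeries.coeff_monomial, MvPowerSeries.coeff_monomial]
  simp only [finsupp2_eq_iff, finsupp2_zero_iff]
  split_ifs <;> omega
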